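/- Let K̂ = U_{VR} Σ_R U_{VR}^T be a rank-r covariance, partitioned into blocks K̂_{S^c}, K̂_{S^c S}, K̂_{S S^c}, K̂_S according to a subset S. If U_{SR} has full column rank, then the MAP/conditional mean K̂_{S^c S}(K̂_S)^+ f_S equals the least squares bandlimited reconstruction U_{S^c R}(U_{SR}^T U_{SR})^{-1} U_{SR}^T f_S for every f_S in the column span of U_{SR}. -/

import Mathlib

open Matrix

/-- `P` is the Moore–Penrose pseudoinverse of `A` (the four Penrose conditions;
the Moore–Penrose pseudoinverse is unique). -/
def IsMoorePenrose {α β : Type*} [Fintype α] [Fintype β]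
    (A : Matrix α β ℝ) (P : Matrix β α ℝ) : Prop :=
  A * P * A = A ∧ P * A * P = P ∧ (A * P)ᵀ = A * P ∧ (P * A)ᵀ = P * A

lemma isUnit_of_rank_eq_card {n : Type*} [Fintype n] [DecidableEq n]
    (A : Matrix n n ℝ) (h : A.rank = Fintype.card n) : IsUnit A := by
  rw [← Matrix.mulVec_surjective_iff_isUnit]
  have htop : LinearMap.range A.mulVecLin = ⊤ := by
    apply Submodule.eq_top_of_finrank_eq
    rw [← Matrix.rank, h, Module.finrank_fintype_fun_eq_card]
  intro v
  obtain ⟨w, hw⟩ := LinearMap.range_eq_top.mp htop v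
  exact ⟨w, hw⟩

/-- With the rank-`r` covariance `K̂ = U_{VR} Σ_R U_{VR}ᵀ` and `U_{SR}` of full column
rank, the MAP/conditional mean `K̂_{Sᶜ S} (K̂_S)⁺ f_S` equals the least squares
bandlimited reconstruction `U_{SᶜR} (U_{SR}ᵀ U_{SR})⁻¹ U_{SR}ᵀ f_S` for every `f_S`
in the column span of `U_{SR}`. -/
theorem map_inference_eq_bandlimited_reconstruction {N r : ℕ}
    (U : Matrix (Fin N) (Fin r) ℝ) (hU : Uᵀ * U = 1)
    (d : Fin r → ℝ) (hd : ∀ i, 0 < d i) (S : Finset (Fin N))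
    (hrank : (U.submatrix (fun i : {x // x ∈ S} => (i : Fin N)) id).rank = r)
    (P : Matrix {x // x ∈ S} {x // x ∈ S} ℝ)
    (hP : IsMoorePenrose
      (U.submatrix (fun i : {x // x ∈ S} => (i : Fin N)) id * Matrix.diagonal d *
        (U.submatrix (fun i : {x // x ∈ S} => (i : Fin N)) id)ᵀ) P)
    (fS : {x // x ∈ S} → ℝ)
    (hfS : ∃ a : Fin r → ℝ,
      fS = U.submatrix (fun i : {x // x ∈ S} => (i : Fin N)) id *ᵥ a) :
    (U.submatrix (fun i : {x // x ∉ S} => (i : Fin N)) id * Matrix.diagonal d *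
        (U.submatrix (fun i : {x // x ∈ S} => (i : Fin N)) id)ᵀ) *ᵥ (P *ᵥ fS)
      = U.submatrix (fun i : {x // x ∉ S} => (i : Fin N)) id *ᵥ
          (((U.submatrix (fun i : {x // x ∈ S} => (i : Fin N)) id)ᵀ *
              U.submatrix (fun i : {x // x ∈ S} => (i : Fin N)) id)⁻¹ *ᵥ
            ((U.submatrix (fun i : {x // x ∈ S} => (i : Fin N)) id)ᵀ *ᵥ fS)) := by
  obtain ⟨a, rfl⟩ := hfS
  set B := U.submatrix (fun i : {x // x ∈ S} => (i : Fin N)) id with hB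
  set C := U.submatrix (fun i : {x // x ∉ S} => (i : Fin N)) id with hC
  set D := Matrix.diagonal d with hDdef
  set G := Bᵀ * B with hGdef
  -- G is invertible
  have hGrank : G.rank = Fintype.card (Fin r) := by
    rw [hGdef, Matrix.rank_transpose_mul_self, hrank, Fintype.card_fin]
  have hGunit : IsUnit G := isUnit_of_rank_eq_card G hGrank
  have hGdet : IsUnit G.det := (Matrix.isUnit_iff_isUnit_det G).mp hGunit
  -- D is invertible
  have hDdet : IsUnit D.det := by
    rw [hDdef, Matrix.det_diagonal]
    exact IsUnit.of_mul_eq_one (∏ i, (d i)⁻¹) (by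
      rw [← Finset.prod_mul_distrib]
      exact Finset.prod_eq_one fun i _ => mul_inv_cancel₀ (hd i).ne')
  -- Key identity: D * Bᵀ * P * B = 1
  have hkey : D * (Bᵀ * P * B) = 1 := by
    have h1 := hP.1
    -- (B*D*Bᵀ) * P * (B*D*Bᵀ) = B*D*Bᵀ
    have h2 : G * (D * (Bᵀ * P * B) * D) * G = G * D * G := by
      calc G * (D * (Bᵀ * P * B) * D) * G
          = Bᵀ * ((B * D * Bᵀ) * P * (B * D * Bᵀ)) * B := by
            simp only [hGdef, Matrix.mul_assoc]
        _ = Bᵀ * (B * D * Bᵀ) * B := by rw [h1]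
        _ = G * D * G := by simp only [hGdef, Matrix.mul_assoc]
    have h3 : D * (Bᵀ * P * B) * D = D := by
      haveI : Invertible G := G.invertibleOfIsUnitDet hGdet
      have := congrArg (fun M => ⅟G * M * ⅟G) h2
      simpa [Matrix.mul_assoc, invOf_mul_cancel_left, mul_invOf_cancel_right,
        invOf_mul_self, mul_invOf_self] using this
    haveI : Invertible D := D.invertibleOfIsUnitDet hDdet
    have := congrArg (fun M => M * ⅟D) h3
    simpa [Matrix.mul_assoc, mul_invOf_cancel_right, mul_invOf_self] using this
  -- LHS
  have hkeyC : C * D * Bᵀ * P * B = C := by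
    calc C * D * Bᵀ * P * B = C * (D * (Bᵀ * P * B)) := by
          simp only [Matrix.mul_assoc]
      _ = C := by rw [hkey, Matrix.mul_one]
  have hL : (C * D * Bᵀ) *ᵥ (P *ᵥ (B *ᵥ a)) = C *ᵥ a := by
    rw [Matrix.mulVec_mulVec, Matrix.mulVec_mulVec, hkeyC]
  have hR : C *ᵥ (G⁻¹ *ᵥ (Bᵀ *ᵥ (B *ᵥ a))) = C *ᵥ a := by
    have hCG : C * G⁻¹ * Bᵀ * B = C := by
      calc C * G⁻¹ * Bᵀ * B = C * (G⁻¹ * G) := by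
            simp only [hGdef, Matrix.mul_assoc]
        _ = C := by rw [Matrix.nonsing_inv_mul G hGdet, Matrix.mul_one]
    rw [Matrix.mulVec_mulVec, Matrix.mulVec_mulVec, Matrix.mulVec_mulVec, hCG]
  rw [hL, hR]
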